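/- Let L be a free ℤ-module of finite rank with a symmetric ℤ-bilinear form b, fix H ∈ L, and let E ⊆ L be a set of nonzero classes such that b(H,β) > 0 for every β ∈ E, and such that for each β ∈ E the set of ordered pairs (β₁,β₂) ∈ E × E with β₁+β₂ = β is finite. Suppose f, g : L → ℚ both vanish outside E and both satisfy, for every β ∈ E, the recursion f(β)·b(β,β) = 8·Σ_{(β₁,β₂)∈E×E, β₁+β₂=β} f(β₁)·f(β₂)·b(β₁,β₂) (and likewise for g). If f(β) = g(β) for every β ∈ E with b(β,β) = 0, then f = g. -/
import Mathlib


/-- Let `L` be a free ℤ-module of finite rank with a symmetric bilinear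
form `b`, `H ∈ L`, and `E ⊆ L` a set of nonzero classes with `b(H,β) > 0` for `β ∈ E`,
each admitting only finitely many decompositions `β = β₁ + β₂` with `βᵢ ∈ E`. If
`f, g : L → ℚ` both vanish outside `E`, both satisfy the recursion
`f(β)·b(β,β) = 8·Σ_{β₁+β₂=β, βᵢ∈E} f(β₁)·f(β₂)·b(β₁,β₂)` for every `β ∈ E`, and agree
on every `β ∈ E` with `b(β,β) = 0`, then `f = g`. -/
theorem stmt_11 (L : Type*) [AddCommGroup L] [Module ℤ L]
    [Module.Free ℤ L] [Module.Finite ℤ L]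
    (b : L →ₗ[ℤ] L →ₗ[ℤ] ℤ) (hsymm : ∀ x y : L, b x y = b y x)
    (H : L)
    (E : Set L) (hE0 : ∀ β ∈ E, β ≠ 0) (hEpos : ∀ β ∈ E, 0 < b H β)
    (hfin : ∀ β ∈ E, {p : L × L | p.1 ∈ E ∧ p.2 ∈ E ∧ p.1 + p.2 = β}.Finite)
    (f g : L → ℚ) (hf0 : ∀ β ∉ E, f β = 0) (hg0 : ∀ β ∉ E, g β = 0)
    (hfrec : ∀ β ∈ E, f β * (b β β : ℚ) =
      8 * ∑ᶠ p ∈ {p : L × L | p.1 ∈ E ∧ p.2 ∈ E ∧ p.1 + p.2 = β},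
        f p.1 * f p.2 * (b p.1 p.2 : ℚ))
    (hgrec : ∀ β ∈ E, g β * (b β β : ℚ) =
      8 * ∑ᶠ p ∈ {p : L × L | p.1 ∈ E ∧ p.2 ∈ E ∧ p.1 + p.2 = β},
        g p.1 * g p.2 * (b p.1 p.2 : ℚ))
    (hiso : ∀ β ∈ E, b β β = 0 → f β = g β) :
    f = g := by
  have key : ∀ n : ℕ, ∀ β ∈ E, (b H β).toNat ≤ n → f β = g β := by
    intro n
    induction n with
    | zero =>
      intro β hβ hle
      have := hEpos β hβ
      omega
    | succ n ih =>
      intro β hβ hle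
      by_cases hiso' : b β β = 0
      · exact hiso β hβ hiso'
      · have hsum : (∑ᶠ p ∈ {p : L × L | p.1 ∈ E ∧ p.2 ∈ E ∧ p.1 + p.2 = β},
            f p.1 * f p.2 * (b p.1 p.2 : ℚ)) =
            ∑ᶠ p ∈ {p : L × L | p.1 ∈ E ∧ p.2 ∈ E ∧ p.1 + p.2 = β},
            g p.1 * g p.2 * (b p.1 p.2 : ℚ) := by
          apply finsum_mem_congr rfl
          rintro ⟨β₁, β₂⟩ ⟨h1, h2, h12⟩
          have hb1 := hEpos β₁ h1
          have hb2 := hEpos β₂ h2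
          have hbsum : b H β₁ + b H β₂ = b H β := by
            rw [← h12]; simp
          have e1 : f β₁ = g β₁ := ih β₁ h1 (by omega)
          have e2 : f β₂ = g β₂ := ih β₂ h2 (by omega)
          simp [e1, e2]
        have hf := hfrec β hβ
        have hg := hgrec β hβ
        rw [hsum] at hf
        have : f β * (b β β : ℚ) = g β * (b β β : ℚ) := by rw [hf, hg]
        have hbne : ((b β β : ℚ)) ≠ 0 := by exact_mod_cast hiso'
        exact mul_right_cancel₀ hbne this
  funext β
  by_cases hβ : β ∈ E
  · exact key (b H β).toNat β hβ le_rfl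
  · rw [hf0 β hβ, hg0 β hβ]
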